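/- Let N be an even positive integer and m an integer such that either (i) m ≡ 0 (mod 4), or (ii) m ≡ 2 (mod 4) and N ≡ 2 (mod 4). Let v := exp(πi/N), ω := exp(πi/(4N)), and t_j := i^{N−1−j}·ω^{(N+j)²}. Then for every integer l with 0 ≤ l ≤ N−1, ∑_{j=1, j odd}^{N−1} t_j^m · D_m(j,l) = (mN/4) · ∑_{j=1, j odd}^{N−1} exp(πi m j²/(4N)) · S(j−l, j+l). (This is the identity underlying Theorem 2 of the paper, relating the Kashaev invariant of the (m,2)-cable K^{(m,2)} of any knot K to the colored Jones polynomials of K with framing m/2.) -/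

import Mathlib

open Complex

/-- `v = exp(πi/N)`. -/
noncomputable def vN (N : ℕ) : ℂ := Complex.exp (Real.pi * Complex.I / N)

/-- `{n} = v^n - v^{-n}` at `v = exp(πi/N)`. -/
noncomputable def br (N : ℕ) (n : ℤ) : ℂ := vN N ^ n - vN N ^ (-n)

/-- `A(j,k) = {j-k}{j+k}`. -/
noncomputable def AA (N : ℕ) (j k : ℤ) : ℂ := br N (j - k) * br N (j + k)

/-- `D_m(j,l)` from the context. -/
noncomputable def DD (N : ℕ) (m j : ℤ) (l : ℕ) : ℂ :=
  (vN N ^ j + vN N ^ (-j)) *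
      ((∏ k ∈ Finset.Icc 1 l, AA N j (k : ℤ)) +
        2 * (br N j) ^ 2 *
          ∑ k ∈ Finset.Icc 1 l, ∏ k' ∈ (Finset.Icc 1 l).erase k, AA N j (k' : ℤ)) +
    ((m : ℂ) * (j : ℂ) / 2) * br N j * ∏ k ∈ Finset.Icc 1 l, AA N j (k : ℤ)


/-- `S(k,l) = ∏_{k ≤ r ≤ l} {r}`. -/
noncomputable def SS (N : ℕ) (k l : ℤ) : ℂ := ∏ r ∈ Finset.Icc k l, br N r

/-- `ω = exp(πi/(4N))`. -/
noncomputable def om (N : ℕ) : ℂ := Complex.exp (Real.pi * Complex.I / (4 * N))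

/-- `t_j = i^{N-1-j} ω^{(N+j)²}`. -/
noncomputable def tt (N : ℕ) (j : ℤ) : ℂ :=
  Complex.I ^ ((N : ℤ) - 1 - j) * om N ^ (((N : ℤ) + j) ^ 2)

/-! ### Auxiliary lemmas -/

/-- `c = πi/(4N)`, the logarithm of `ω`. -/
noncomputable def ccc (N : ℕ) : ℂ := Real.pi * Complex.I / (4 * N)

lemma exp_ccc_eq (N : ℕ) (hN : 0 < N) {a b : ℤ} (h : (8 * N : ℤ) ∣ a - b) :
    Complex.exp ((a : ℂ) * ccc N) = Complex.exp ((b : ℂ) * ccc N) := by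
  obtain ⟨t, ht⟩ := h
  have ha : (a : ℂ) = (b : ℂ) + 8 * N * t := by
    have : a = b + 8 * (N : ℤ) * t := by linarith
    exact_mod_cast congrArg (Int.cast : ℤ → ℂ) this
  have hNne : (N : ℂ) ≠ 0 := Nat.cast_ne_zero.mpr hN.ne'
  rw [ha, add_mul, Complex.exp_add]
  have h8 : ((8 : ℂ) * N * t) * ccc N = (t : ℂ) * (2 * Real.pi * Complex.I) := by
    unfold ccc; field_simp; ring
  rw [h8, Complex.exp_int_mul_two_pi_mul_I, mul_one]

lemma om_zpow (N : ℕ) (a : ℤ) : om N ^ a = Complex.exp ((a : ℂ) * ccc N) := by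
  rw [om, ccc]
  exact (Complex.exp_int_mul _ a).symm

lemma I_eq_exp (N : ℕ) (hN : 0 < N) :
    Complex.I = Complex.exp (((2 * N : ℤ) : ℂ) * ccc N) := by
  have hNne : (N : ℂ) ≠ 0 := Nat.cast_ne_zero.mpr hN.ne'
  have : (((2 * N : ℤ) : ℂ)) * ccc N = (Real.pi / 2 : ℝ) * Complex.I := by
    unfold ccc; push_cast; field_simp; ring
  rw [this]
  simp [Complex.exp_mul_I]

lemma tt_eq_exp (N : ℕ) (hN : 0 < N) (j : ℤ) :
    tt N j = Complex.exp (((2 * N * ((N : ℤ) - 1 - j) + ((N : ℤ) + j) ^ 2 : ℤ) : ℂ) * ccc N) := by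
  rw [tt, I_eq_exp N hN, om_zpow, ← Complex.exp_int_mul, ← Complex.exp_add]
  congr 1
  push_cast
  ring

lemma dvd8 (N : ℕ) (hNeven : Even N) (m : ℤ)
    (hm : m % 4 = 0 ∨ (m % 4 = 2 ∧ N % 4 = 2)) (x : ℤ) (hx : ∃ y : ℤ, x = 2 * y ∧
      (N % 4 = 2 → ∃ z : ℤ, x = 4 * z)) :
    (8 * N : ℤ) ∣ m * (N : ℤ) * x := by
  obtain ⟨y, hy, hz⟩ := hx
  rcases hm with hm | ⟨hm, hN4⟩
  · obtain ⟨a, rfl⟩ : ∃ a, m = 4 * a := ⟨m / 4, by omega⟩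
    exact ⟨a * y, by rw [hy]; ring⟩
  · obtain ⟨k, rfl⟩ : ∃ k, m = 4 * k + 2 := ⟨m / 4, by omega⟩
    obtain ⟨z, hz⟩ := hz hN4
    exact ⟨(2 * k + 1) * z, by rw [hz]; ring⟩

lemma tt_zpow (N : ℕ) (hN : 0 < N) (hNeven : Even N) (m : ℤ)
    (hm : m % 4 = 0 ∨ (m % 4 = 2 ∧ N % 4 = 2)) (j : ℤ) :
    tt N j ^ m = Complex.exp (((m * j ^ 2 : ℤ) : ℂ) * ccc N) := by
  rw [tt_eq_exp N hN, ← Complex.exp_int_mul]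
  rw [show (m : ℂ) * (((2 * N * ((N : ℤ) - 1 - j) + ((N : ℤ) + j) ^ 2 : ℤ) : ℂ) * ccc N)
      = (((m * (2 * N * ((N : ℤ) - 1 - j) + ((N : ℤ) + j) ^ 2) : ℤ) : ℂ)) * ccc N by
    push_cast; ring]
  apply exp_ccc_eq N hN
  have heq : m * (2 * N * ((N : ℤ) - 1 - j) + ((N : ℤ) + j) ^ 2) - m * j ^ 2
      = m * (N : ℤ) * (3 * (N : ℤ) - 2) := by ring
  rw [heq]
  apply dvd8 N hNeven m hm
  obtain ⟨b, hb⟩ := hNeven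
  refine ⟨3 * b - 1, by push_cast [hb]; ring, fun hN4 => ?_⟩
  obtain ⟨s, hs⟩ : ∃ s : ℤ, (N : ℤ) = 4 * s + 2 := ⟨(N : ℤ) / 4, by omega⟩
  exact ⟨3 * s + 1, by rw [hs]; ring⟩

lemma tt_zpow_sub (N : ℕ) (hN : 0 < N) (hNeven : Even N) (m : ℤ)
    (hm : m % 4 = 0 ∨ (m % 4 = 2 ∧ N % 4 = 2)) (j : ℤ) (hj : Odd j) :
    Complex.exp (((m * ((N : ℤ) - j) ^ 2 : ℤ) : ℂ) * ccc N)
      = Complex.exp (((m * j ^ 2 : ℤ) : ℂ) * ccc N) := by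
  apply exp_ccc_eq N hN
  have heq : m * ((N : ℤ) - j) ^ 2 - m * j ^ 2 = m * (N : ℤ) * ((N : ℤ) - 2 * j) := by ring
  rw [heq]
  apply dvd8 N hNeven m hm
  obtain ⟨b, hb⟩ := hNeven
  obtain ⟨t, ht⟩ := hj
  refine ⟨b - j, by push_cast [hb]; ring, fun hN4 => ?_⟩
  obtain ⟨s, hs⟩ : ∃ s : ℤ, (N : ℤ) = 4 * s + 2 := ⟨(N : ℤ) / 4, by omega⟩
  exact ⟨s - t, by rw [hs, ht]; ring⟩

lemma vN_zpow (N : ℕ) (a : ℤ) :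
    vN N ^ a = Complex.exp ((a : ℂ) * (Real.pi * Complex.I / N)) := by
  rw [vN, Complex.exp_int_mul]

lemma vN_add_N (N : ℕ) (hN : 0 < N) (a : ℤ) : vN N ^ ((N : ℤ) + a) = - vN N ^ a := by
  have hNne : (N : ℂ) ≠ 0 := Nat.cast_ne_zero.mpr hN.ne'
  rw [vN_zpow, vN_zpow]
  have h : ((((N : ℤ) + a) : ℤ) : ℂ) * (Real.pi * Complex.I / N)
      = Real.pi * Complex.I + (a : ℂ) * (Real.pi * Complex.I / N) := by
    push_cast; field_simp
  rw [h, Complex.exp_add, Complex.exp_pi_mul_I]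
  ring

lemma vN_sub_N (N : ℕ) (hN : 0 < N) (a : ℤ) : vN N ^ (a - (N : ℤ)) = - vN N ^ a := by
  have hNne : (N : ℂ) ≠ 0 := Nat.cast_ne_zero.mpr hN.ne'
  rw [vN_zpow, vN_zpow]
  have h : (((a - (N : ℤ)) : ℤ) : ℂ) * (Real.pi * Complex.I / N)
      = (a : ℂ) * (Real.pi * Complex.I / N) - Real.pi * Complex.I := by
    push_cast; field_simp
  rw [h, Complex.exp_sub, Complex.exp_pi_mul_I]
  ring

lemma br_N_sub (N : ℕ) (hN : 0 < N) (n : ℤ) : br N ((N : ℤ) - n) = br N n := by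
  rw [br, br, show -((N : ℤ) - n) = n - (N : ℤ) by ring, vN_sub_N N hN,
    show (N : ℤ) - n = (N : ℤ) + (-n) by ring, vN_add_N N hN]
  ring

lemma cosh_N_sub (N : ℕ) (hN : 0 < N) (n : ℤ) :
    vN N ^ ((N : ℤ) - n) + vN N ^ (-((N : ℤ) - n)) = -(vN N ^ n + vN N ^ (-n)) := by
  rw [show -((N : ℤ) - n) = n - (N : ℤ) by ring, vN_sub_N N hN,
    show (N : ℤ) - n = (N : ℤ) + (-n) by ring, vN_add_N N hN]
  ring

lemma AA_N_sub (N : ℕ) (hN : 0 < N) (j k : ℤ) : AA N ((N : ℤ) - j) k = AA N j k := by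
  rw [AA, AA, show (N : ℤ) - j - k = (N : ℤ) - (j + k) by ring,
    show (N : ℤ) - j + k = (N : ℤ) - (j - k) by ring, br_N_sub N hN, br_N_sub N hN, mul_comm]

lemma SS_eq (N : ℕ) (j : ℤ) (l : ℕ) :
    SS N (j - l) (j + l) = br N j * ∏ k ∈ Finset.Icc 1 l, (br N (j - k) * br N (j + k)) := by
  induction l with
  | zero => simp [SS]
  | succ l ih =>
    have hset : Finset.Icc (j - (l + 1 : ℕ)) (j + (l + 1 : ℕ))
        = insert (j - (l + 1 : ℕ)) (insert (j + (l + 1 : ℕ)) (Finset.Icc (j - l) (j + l))) := by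
      ext r
      simp only [Finset.mem_insert, Finset.mem_Icc]
      push_cast
      omega
    have h1 : (j - (l + 1 : ℕ)) ∉ insert (j + (l + 1 : ℕ)) (Finset.Icc (j - l) (j + l)) := by
      simp only [Finset.mem_insert, Finset.mem_Icc]
      push_cast
      omega
    have h2 : (j + (l + 1 : ℕ)) ∉ Finset.Icc (j - l) (j + l) := by
      simp only [Finset.mem_Icc]
      push_cast
      omega
    rw [SS, hset, Finset.prod_insert h1, Finset.prod_insert h2,
      Finset.prod_Icc_succ_top (by omega : 1 ≤ l + 1)]
    rw [SS] at ih
    rw [ih]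
    push_cast
    ring

lemma SS_N_sub (N : ℕ) (hN : 0 < N) (j : ℤ) (l : ℕ) :
    SS N (((N : ℤ) - j) - l) (((N : ℤ) - j) + l) = SS N (j - l) (j + l) := by
  rw [SS_eq, SS_eq, br_N_sub N hN]
  congr 1
  apply Finset.prod_congr rfl
  intro k _
  rw [show (N : ℤ) - j - k = (N : ℤ) - (j + k) by ring,
    show (N : ℤ) - j + k = (N : ℤ) - (j - k) by ring, br_N_sub N hN, br_N_sub N hN, mul_comm]

lemma DD_add (N : ℕ) (hN : 0 < N) (m : ℤ) (j : ℤ) (l : ℕ) :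
    DD N m j l + DD N m ((N : ℤ) - j) l
      = ((m : ℂ) * N / 2) * br N j * ∏ k ∈ Finset.Icc 1 l, AA N j (k : ℤ) := by
  have hAA : ∀ k : ℤ, AA N ((N : ℤ) - j) k = AA N j k := AA_N_sub N hN j
  have hbr : br N ((N : ℤ) - j) = br N j := br_N_sub N hN j
  have hcosh := cosh_N_sub N hN j
  rw [DD, DD]
  simp only [hAA, hbr, hcosh]
  push_cast
  ring

lemma pair_eq (N : ℕ) (hN : 0 < N) (hNeven : Even N) (m : ℤ)
    (hm : m % 4 = 0 ∨ (m % 4 = 2 ∧ N % 4 = 2)) (j : ℤ) (hj : Odd j) (l : ℕ) :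
    tt N j ^ m * DD N m j l + tt N ((N : ℤ) - j) ^ m * DD N m ((N : ℤ) - j) l
      = ((m : ℂ) * (N : ℂ) / 4) *
          (Complex.exp (Real.pi * Complex.I * (m : ℂ) * (j : ℂ) ^ 2 / (4 * (N : ℂ))) *
            SS N (j - l) (j + l)) +
        ((m : ℂ) * (N : ℂ) / 4) *
          (Complex.exp (Real.pi * Complex.I * (m : ℂ) * ((N : ℂ) - (j : ℂ)) ^ 2 / (4 * (N : ℂ))) *
            SS N (((N : ℤ) - j) - l) (((N : ℤ) - j) + l)) := by
  have hNne : (N : ℂ) ≠ 0 := Nat.cast_ne_zero.mpr hN.ne'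
  have h1 : tt N j ^ m = Complex.exp (((m * j ^ 2 : ℤ) : ℂ) * ccc N) := tt_zpow N hN hNeven m hm j
  have h2 : tt N ((N : ℤ) - j) ^ m = Complex.exp (((m * j ^ 2 : ℤ) : ℂ) * ccc N) := by
    rw [tt_zpow N hN hNeven m hm, tt_zpow_sub N hN hNeven m hm j hj]
  have h3 : Complex.exp (Real.pi * Complex.I * (m : ℂ) * (j : ℂ) ^ 2 / (4 * (N : ℂ)))
      = Complex.exp (((m * j ^ 2 : ℤ) : ℂ) * ccc N) := by
    congr 1; rw [ccc]; push_cast; ring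
  have h4 : Complex.exp (Real.pi * Complex.I * (m : ℂ) * ((N : ℂ) - (j : ℂ)) ^ 2 / (4 * (N : ℂ)))
      = Complex.exp (((m * j ^ 2 : ℤ) : ℂ) * ccc N) := by
    rw [← tt_zpow_sub N hN hNeven m hm j hj]
    congr 1; rw [ccc]; push_cast; ring
  have h5 := DD_add N hN m j l
  have h6 : SS N (j - l) (j + l) = br N j * ∏ k ∈ Finset.Icc 1 l, AA N j (k : ℤ) := by
    rw [SS_eq]; simp only [AA]
  have h7 := SS_N_sub N hN j l
  rw [h1, h2, h3, h4, h7, h6]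
  set E := Complex.exp (((m * j ^ 2 : ℤ) : ℂ) * ccc N)
  have : tt N j ^ m * DD N m j l + tt N ((N : ℤ) - j) ^ m * DD N m ((N : ℤ) - j) l
      = E * (DD N m j l + DD N m ((N : ℤ) - j) l) := by rw [h1, h2]; ring
  calc E * DD N m j l + E * DD N m ((N : ℤ) - j) l
      = E * (DD N m j l + DD N m ((N : ℤ) - j) l) := by ring
    _ = E * (((m : ℂ) * N / 2) * br N j * ∏ k ∈ Finset.Icc 1 l, AA N j (k : ℤ)) := by rw [h5]
    _ = _ := by ring

/-- The identity underlying Theorem 2 of the paper: for even `N` and `m ≡ 0 (mod 4)`,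
or `m ≡ 2 (mod 4)` and `N ≡ 2 (mod 4)`, and every `0 ≤ l ≤ N-1`,
`∑_{j odd} t_j^m D_m(j,l) = (mN/4) ∑_{j odd} exp(πimj²/(4N)) S(j-l, j+l)`. -/
theorem sum_t_pow_D_eq (N : ℕ) (hN : 0 < N) (hNeven : Even N) (m : ℤ)
    (hm : m % 4 = 0 ∨ (m % 4 = 2 ∧ N % 4 = 2)) (l : ℕ) (hl : l ≤ N - 1) :
    ∑ j ∈ (Finset.Icc 1 (N - 1)).filter (fun j => Odd j),
        tt N (j : ℤ) ^ m * DD N m (j : ℤ) l =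
      ((m : ℂ) * (N : ℂ) / 4) *
        ∑ j ∈ (Finset.Icc 1 (N - 1)).filter (fun j => Odd j),
          Complex.exp (Real.pi * Complex.I * (m : ℂ) * (j : ℂ) ^ 2 / (4 * (N : ℂ))) *
            SS N ((j : ℤ) - (l : ℤ)) ((j : ℤ) + (l : ℤ)) := by
  set s := (Finset.Icc 1 (N - 1)).filter (fun j => Odd j) with hs
  have hmem : ∀ j ∈ s, 1 ≤ j ∧ j ≤ N - 1 ∧ Odd j := by
    intro j hj
    simp only [hs, Finset.mem_filter, Finset.mem_Icc] at hj
    exact ⟨hj.1.1, hj.1.2, hj.2⟩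
  have hsig : ∀ j ∈ s, N - j ∈ s := by
    intro j hj
    obtain ⟨h1, h2, h3⟩ := hmem j hj
    simp only [hs, Finset.mem_filter, Finset.mem_Icc]
    have hN2 : 2 ≤ N := by
      rcases hNeven with ⟨b, hb⟩
      omega
    refine ⟨⟨by omega, by omega⟩, Nat.Even.sub_odd (by omega) hNeven h3⟩
  have hinv : ∀ j ∈ s, N - (N - j) = j := by
    intro j hj
    obtain ⟨h1, h2, h3⟩ := hmem j hj
    omega
  have hswap : ∀ F : ℕ → ℂ, ∑ j ∈ s, F j = ∑ j ∈ s, F (N - j) := by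
    intro F
    exact Finset.sum_nbij' (fun j => N - j) (fun j => N - j) hsig hsig hinv hinv
      (fun a ha => by rw [hinv a ha])
  set f : ℕ → ℂ := fun j => tt N (j : ℤ) ^ m * DD N m (j : ℤ) l with hf
  set g : ℕ → ℂ := fun j => ((m : ℂ) * (N : ℂ) / 4) *
      (Complex.exp (Real.pi * Complex.I * (m : ℂ) * (j : ℂ) ^ 2 / (4 * (N : ℂ))) *
        SS N ((j : ℤ) - (l : ℤ)) ((j : ℤ) + (l : ℤ))) with hg
  have hkey : ∀ j ∈ s, f j + f (N - j) = g j + g (N - j) := by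
    intro j hj
    obtain ⟨h1, h2, h3⟩ := hmem j hj
    have hjN : j ≤ N := by omega
    have hcast : ((N - j : ℕ) : ℤ) = (N : ℤ) - (j : ℤ) := by
      push_cast [Nat.cast_sub hjN]; ring
    have hcastC : ((N - j : ℕ) : ℂ) = (N : ℂ) - (j : ℂ) := by
      push_cast [Nat.cast_sub hjN]; ring
    have hjodd : Odd (j : ℤ) := (Int.odd_coe_nat j).mpr h3
    simp only [hf, hg, hcast, hcastC]
    exact pair_eq N hN hNeven m hm (j : ℤ) hjodd l
  have hgoal : ∑ j ∈ s, f j = ∑ j ∈ s, g j := by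
    have h2 : (2 : ℂ) * ∑ j ∈ s, f j = (2 : ℂ) * ∑ j ∈ s, g j := by
      calc (2 : ℂ) * ∑ j ∈ s, f j = (∑ j ∈ s, f j) + ∑ j ∈ s, f (N - j) := by
            rw [← hswap f]; ring
        _ = ∑ j ∈ s, (f j + f (N - j)) := (Finset.sum_add_distrib).symm
        _ = ∑ j ∈ s, (g j + g (N - j)) := Finset.sum_congr rfl hkey
        _ = (∑ j ∈ s, g j) + ∑ j ∈ s, g (N - j) := Finset.sum_add_distrib
        _ = (2 : ℂ) * ∑ j ∈ s, g j := by rw [← hswap g]; ring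
    exact mul_left_cancel₀ two_ne_zero h2
  rw [Finset.mul_sum]
  exact hgoal
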